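/- For every x ∈ D_{i,j} there exists an open neighborhood V of x in S_i' with closure(V) ⊂ Int^Φ(S_i') such that: t'_{i,j} is continuous on V; t'_{i,j}(y) ≤ 2η for all y ∈ V; T'_{i,j}|_V : V → S_j' is an open map; and T'_{i,j}|_V : V → T'_{i,j}(V) is a homeomorphism. -/

import Mathlib

open Set Topology

/-- A topological flow. -/
structure IsFlow (X : Type*) [TopologicalSpace X] (φ : ℝ → X → X) : Prop where
  cont : Continuous fun p : X × ℝ => φ p.2 p.1
  map_zero : ∀ x : X, φ 0 x = x
  map_add : ∀ s t : ℝ, ∀ x : X, φ (s + t) x = φ s (φ t x)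

variable {X : Type*}

/-- `Φ_L(A) = {Φ_t(x) : t ∈ L, x ∈ A}`. -/
def flowSet (φ : ℝ → X → X) (L : Set ℝ) (A : Set X) : Set X :=
  {y | ∃ t ∈ L, ∃ x ∈ A, φ t x = y}

/-- A cross-section of injectivity time `η > 0`. -/
def IsCrossSection (φ : ℝ → X → X) (η : ℝ) (S : Set X) : Prop :=
  0 < η ∧ Set.InjOn (fun p : X × ℝ => φ p.2 p.1) (S ×ˢ Set.Icc (-η) η)

/-- The flow interior (taking `γ = η/2`). -/
def flowInterior [TopologicalSpace X] (φ : ℝ → X → X) (η : ℝ) (U : Set X) : Set X :=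
  interior (flowSet φ (Set.Icc (-(η / 2)) (η / 2)) U) ∩ U

/-- First positive hitting time of a set `T`: `sInf {t > 0 : Φ_t(x) ∈ T}` (the paper's
`t'_{i,j}` when `T = S_j'`). -/
noncomputable def hitT (φ : ℝ → X → X) (T : Set X) (x : X) : ℝ :=
  sInf {t : ℝ | 0 < t ∧ φ t x ∈ T}

/-- The hitting map `T'_{i,j}(x) = Φ_{t'_{i,j}(x)}(x)`. -/
noncomputable def hitMap (φ : ℝ → X → X) (T : Set X) (x : X) : X :=
  φ (hitT φ T x) x

/-- `D_{i,j}`: the points of `Sᵢ` whose first positive hitting time of `Sⱼ` exists (as a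
minimum) and is at most `η`. -/
def Dij (φ : ℝ → X → X) (Si Sj : Set X) (η : ℝ) : Set X :=
  {x ∈ Si | ∃ t : ℝ, 0 < t ∧ t ≤ η ∧ φ t x ∈ Sj ∧
    ∀ s : ℝ, 0 < s → φ s x ∈ Sj → t ≤ s}

section aux
variable [TopologicalSpace X] {φ : ℝ → X → X}

lemma IsFlow.contPt (hφ : IsFlow X φ) (y : X) : Continuous fun t : ℝ => φ t y :=
  hφ.cont.comp (continuous_const.prodMk continuous_id)

lemma IsFlow.neg_cancel (hφ : IsFlow X φ) (t : ℝ) (x : X) : φ (-t) (φ t x) = x := by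
  rw [← hφ.map_add]; simp [hφ.map_zero]

lemma time_sep {η : ℝ} {T : Set X} (hφ : IsFlow X φ) (hcs : IsCrossSection φ η T)
    {z : X} {t1 t2 : ℝ} (h1 : φ t1 z ∈ T) (h2 : φ t2 z ∈ T)
    (h : |t1 - t2| ≤ 2 * η) : t1 = t2 := by
  have hη := hcs.1
  have habs := abs_le.mp h
  set m := (t2 - t1) / 2 with hm
  have hmem1 : ((φ t1 z, m) : X × ℝ) ∈ T ×ˢ Icc (-η) η :=
    ⟨h1, by constructor <;> [skip; skip] <;> simp [hm] <;> linarith [habs.1, habs.2]⟩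
  have hmem2 : ((φ t2 z, -m) : X × ℝ) ∈ T ×ˢ Icc (-η) η :=
    ⟨h2, by constructor <;> [skip; skip] <;> simp [hm] <;> linarith [habs.1, habs.2]⟩
  have heq : (fun p : X × ℝ => φ p.2 p.1) (φ t1 z, m) = (fun p : X × ℝ => φ p.2 p.1) (φ t2 z, -m) := by
    simp only
    rw [← hφ.map_add, ← hφ.map_add]
    congr 1
    rw [hm]; ring
  have hpair := hcs.2 hmem1 hmem2 heq
  have hmm : m = -m := congrArg Prod.snd hpair
  have : m = 0 := by linarith
  rw [hm] at this; linarith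

noncomputable def winHit (φ : ℝ → X → X) (T : Set X) (l r : ℝ) (y : X) : ℝ :=
  sInf {t : ℝ | t ∈ Icc l r ∧ φ t y ∈ T}

lemma winHit_spec (hφ : IsFlow X φ) {T : Set X} (hT : IsClosed T) {l r : ℝ} {y : X}
    (hex : ∃ t ∈ Icc l r, φ t y ∈ T) :
    winHit φ T l r y ∈ Icc l r ∧ φ (winHit φ T l r y) y ∈ T := by
  have hS : {t : ℝ | t ∈ Icc l r ∧ φ t y ∈ T} = Icc l r ∩ (fun t => φ t y) ⁻¹' T := rfl
  have hcl : IsClosed {t : ℝ | t ∈ Icc l r ∧ φ t y ∈ T} := by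
    rw [hS]; exact isClosed_Icc.inter (hT.preimage (hφ.contPt y))
  have hcpt : IsCompact {t : ℝ | t ∈ Icc l r ∧ φ t y ∈ T} :=
    isCompact_Icc.of_isClosed_subset hcl (by rw [hS]; exact inter_subset_left)
  obtain ⟨t, ht, htT⟩ := hex
  exact hcpt.sInf_mem ⟨t, ht, htT⟩

lemma win_unique {η : ℝ} {T : Set X} (hφ : IsFlow X φ) (hcs : IsCrossSection φ η T)
    {l r : ℝ} (hlr : r - l ≤ 2 * η) {y : X} {t t' : ℝ}
    (ht : t ∈ Icc l r) (h1 : φ t y ∈ T) (ht' : t' ∈ Icc l r) (h2 : φ t' y ∈ T) : t = t' :=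
  time_sep hφ hcs h1 h2 (abs_le.mpr ⟨by linarith [ht.1, ht.2, ht'.1, ht'.2],
    by linarith [ht.1, ht.2, ht'.1, ht'.2]⟩)

lemma winHit_eq {η : ℝ} {T : Set X} (hφ : IsFlow X φ) (hT : IsClosed T)
    (hcs : IsCrossSection φ η T) {l r : ℝ} (hlr : r - l ≤ 2 * η) {y : X} {t : ℝ}
    (ht : t ∈ Icc l r) (h1 : φ t y ∈ T) : winHit φ T l r y = t := by
  obtain ⟨hmem, hhit⟩ := winHit_spec hφ hT ⟨t, ht, h1⟩
  exact win_unique hφ hcs hlr hmem hhit ht h1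

end aux

section cont
variable [MetricSpace X] [CompactSpace X] {φ : ℝ → X → X}

lemma winHit_continuousOn {η : ℝ} {T : Set X} (hφ : IsFlow X φ) (hT : IsClosed T)
    (hcs : IsCrossSection φ η T) {l r : ℝ} (hlr : r - l ≤ 2 * η) {U : Set X}
    (hU : IsOpen U) (hex : ∀ y ∈ U, ∃ t ∈ Icc l r, φ t y ∈ T) :
    ContinuousOn (winHit φ T l r) U := by
  intro y hy
  apply ContinuousAt.continuousWithinAt
  rw [ContinuousAt, Metric.tendsto_nhds]
  intro ε hε
  set sy := winHit φ T l r y with hsy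
  set C : Set (X × ℝ) := {p | p.2 ∈ Icc l r ∧ φ p.2 p.1 ∈ T ∧ ε ≤ |p.2 - sy|} with hC
  have hCcl : IsClosed C := by
    apply IsClosed.inter (isClosed_Icc.preimage continuous_snd)
    apply IsClosed.inter (hT.preimage hφ.cont)
    exact isClosed_le continuous_const ((continuous_snd.sub continuous_const).abs)
  have hCcpt : IsCompact C := by
    apply IsCompact.of_isClosed_subset (isCompact_univ.prod isCompact_Icc) hCcl
    rintro ⟨z, t⟩ ⟨h1, -, -⟩
    exact ⟨trivial, h1⟩
  have hproj : IsClosed (Prod.fst '' C) := (hCcpt.image continuous_fst).isClosed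
  have hyn : y ∉ Prod.fst '' C := by
    rintro ⟨⟨z, t⟩, ⟨htI, htT, htε⟩, hz⟩
    simp only at hz
    subst hz
    have : sy = t := winHit_eq hφ hT hcs hlr htI htT
    rw [← this] at htε
    simp at htε
    linarith
  have hnb : (Prod.fst '' C)ᶜ ∩ U ∈ nhds y :=
    ((hproj.isOpen_compl.inter hU).mem_nhds ⟨hyn, hy⟩)
  filter_upwards [hnb] with z hz
  obtain ⟨hzn, hzU⟩ := hz
  obtain ⟨hmem, hhit⟩ := winHit_spec hφ hT (hex z hzU)
  rw [Real.dist_eq]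
  by_contra hcon
  push_neg at hcon
  exact hzn ⟨(z, winHit φ T l r z), ⟨hmem, hhit, hcon⟩, rfl⟩

end cont

/-- Around any point of `D_{i,j}` there is a relatively open neighborhood `V` in `Sᵢ'`,
with closure inside `Int^Φ(Sᵢ')`, on which `t'_{i,j}` is continuous and `≤ 2η`, and on
which `T'_{i,j}` is an open map into `Sⱼ'` and a homeomorphism onto its image. -/
theorem exists_nbhd_hitMap_homeo
    {X : Type*} [MetricSpace X] [CompactSpace X]
    (φ : ℝ → X → X) (hφ : IsFlow X φ) (η : ℝ)
    (Si Sj Si' Sj' : Set X)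
    (hSi : IsClosed Si) (hSj : IsClosed Sj) (hSi' : IsClosed Si') (hSj' : IsClosed Sj')
    (hcsi : IsCrossSection φ η Si) (hcsj : IsCrossSection φ η Sj)
    (hcsi' : IsCrossSection φ η Si') (hcsj' : IsCrossSection φ η Sj')
    (hii' : Si ⊆ flowInterior φ η Si') (hjj' : Sj ⊆ flowInterior φ η Sj') :
    ∀ x ∈ Dij φ Si Sj η,
      ∃ V : Set X, x ∈ V ∧ V ⊆ Si' ∧
        IsOpen {y : Si' | (y : X) ∈ V} ∧
        closure V ⊆ flowInterior φ η Si' ∧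
        ContinuousOn (hitT φ Sj') V ∧
        (∀ y ∈ V, 0 < hitT φ Sj' y ∧ hitT φ Sj' y ≤ 2 * η ∧ hitMap φ Sj' y ∈ Sj') ∧
        (∀ A : Set X, A ⊆ V → IsOpen {y : Si' | (y : X) ∈ A} →
          IsOpen {y : Sj' | (y : X) ∈ hitMap φ Sj' '' A}) ∧
        Set.InjOn (hitMap φ Sj') V ∧ ContinuousOn (hitMap φ Sj') V := by
  intro x hx
  obtain ⟨hxSi, t0, ht0pos, ht0η, hxj, hmin⟩ := hx
  have hη : 0 < η := hcsi'.1
  have hxInt : x ∈ flowInterior φ η Si' := hii' hxSi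
  have hxSi' : x ∈ Si' := hxInt.2
  set Wi := interior (flowSet φ (Icc (-(η/2)) (η/2)) Si') with hWidef
  set Wj := interior (flowSet φ (Icc (-(η/2)) (η/2)) Sj') with hWjdef
  have hxWi : x ∈ Wi := hxInt.1
  have hyInt : φ t0 x ∈ flowInterior φ η Sj' := hjj' hxj
  have hySj' : φ t0 x ∈ Sj' := hyInt.2
  have hyWj : φ t0 x ∈ Wj := hyInt.1
  -- window existence lemma
  have hexist : ∀ (a : ℝ) (T : Set X) (y : X), φ a y ∈ flowSet φ (Icc (-(η/2)) (η/2)) T →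
      ∃ t ∈ Icc (a - η/2) (a + η/2), φ t y ∈ T := by
    rintro a T y ⟨u, hu, w, hw, hweq⟩
    refine ⟨a - u, ⟨by linarith [hu.1, hu.2], by linarith [hu.1, hu.2]⟩, ?_⟩
    have h1 : φ (a - u) y = φ (-u) (φ a y) := by
      rw [← hφ.map_add]; congr 1; ring
    rw [h1, ← hweq, hφ.neg_cancel]
    exact hw
  -- the forward window map
  set U1 : Set X := (fun y => φ t0 y) ⁻¹' Wj with hU1def
  have hU1open : IsOpen U1 :=
    isOpen_interior.preimage (hφ.cont.comp (continuous_id.prodMk continuous_const))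
  have hxU1 : x ∈ U1 := hyWj
  have hex1 : ∀ y ∈ U1, ∃ t ∈ Icc (t0 - η/2) (t0 + η/2), φ t y ∈ Sj' :=
    fun y hy => hexist t0 Sj' y (interior_subset hy)
  have hlr1 : (t0 + η/2) - (t0 - η/2) ≤ 2 * η := by linarith
  set s := winHit φ Sj' (t0 - η/2) (t0 + η/2) with hsdef
  have hscont : ContinuousOn s U1 := winHit_continuousOn hφ hSj' hcsj' hlr1 hU1open hex1
  have hsx : s x = t0 :=
    winHit_eq hφ hSj' hcsj' hlr1 ⟨by linarith, by linarith⟩ hySj'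
  -- the backward window map
  set U2 : Set X := (fun z => φ (-t0) z) ⁻¹' Wi with hU2def
  have hU2open : IsOpen U2 :=
    isOpen_interior.preimage (hφ.cont.comp (continuous_id.prodMk continuous_const))
  have hex2 : ∀ z ∈ U2, ∃ t ∈ Icc (-t0 - η/2) (-t0 + η/2), φ t z ∈ Si' :=
    fun z hz => hexist (-t0) Si' z (interior_subset hz)
  have hlr2 : (-t0 + η/2) - (-t0 - η/2) ≤ 2 * η := by linarith
  set rr := winHit φ Si' (-t0 - η/2) (-t0 + η/2) with hrrdef
  have hrrcont : ContinuousOn rr U2 := winHit_continuousOn hφ hSi' hcsi' hlr2 hU2open hex2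
  -- the open set Ω
  have hFcont : ContinuousOn (fun y => φ (s y - t0) y) U1 :=
    hφ.cont.comp_continuousOn (f := fun y => (y, s y - t0)) (continuousOn_id.prodMk (hscont.sub continuousOn_const))
  set Ω : Set X := ((U1 ∩ (fun y => φ (s y - t0) y) ⁻¹' Wi) ∩ (U1 ∩ s ⁻¹' Ioi 0)) ∩ Wi
    with hΩdef
  have hΩopen : IsOpen Ω :=
    (((hFcont.isOpen_inter_preimage hU1open isOpen_interior).inter
      (hscont.isOpen_inter_preimage hU1open isOpen_Ioi)).inter isOpen_interior)
  have hxΩ : x ∈ Ω := by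
    refine ⟨⟨⟨hxU1, ?_⟩, hxU1, ?_⟩, hxWi⟩
    · show φ (s x - t0) x ∈ Wi
      rw [hsx, sub_self, hφ.map_zero]
      exact hxWi
    · show s x ∈ Ioi 0
      rw [hsx]; exact ht0pos
  obtain ⟨ρ, hρpos, hρsub⟩ := Metric.isOpen_iff.mp hΩopen x hxΩ
  set V : Set X := Metric.ball x (ρ/2) ∩ Si' with hVdef
  have hVSi' : V ⊆ Si' := inter_subset_right
  have hVΩ : V ⊆ Ω := fun y hy =>
    hρsub (Metric.ball_subset_ball (by linarith) hy.1)
  have hVU1 : V ⊆ U1 := fun y hy => (hVΩ hy).1.1.1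
  have hVspec : ∀ y ∈ V, s y ∈ Icc (t0 - η/2) (t0 + η/2) ∧ φ (s y) y ∈ Sj' ∧ 0 < s y ∧
      φ (s y - t0) y ∈ Wi := by
    intro y hy
    obtain ⟨hm, hh⟩ := winHit_spec hφ hSj' (hex1 y (hVU1 hy))
    exact ⟨hm, hh, (hVΩ hy).1.2.2, (hVΩ hy).1.1.2⟩
  -- hitT agrees with s on V
  have hhit : ∀ y ∈ V, hitT φ Sj' y = s y := by
    intro y hy
    obtain ⟨hsmem, hshit, hspos, -⟩ := hVspec y hy
    show sInf {t : ℝ | 0 < t ∧ φ t y ∈ Sj'} = s y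
    apply le_antisymm
    · exact csInf_le (⟨0, fun t ht => le_of_lt ht.1⟩ : BddBelow {t : ℝ | 0 < t ∧ φ t y ∈ Sj'}) ⟨hspos, hshit⟩
    · apply le_csInf (⟨s y, hspos, hshit⟩ : Set.Nonempty {t : ℝ | 0 < t ∧ φ t y ∈ Sj'})
      rintro t ⟨htpos, htT⟩
      by_contra hlt
      push_neg at hlt
      have hne : t ≠ s y := ne_of_lt hlt
      have h2η : ¬ (|t - s y| ≤ 2 * η) := fun h => hne (time_sep hφ hcsj' htT hshit h)
      push_neg at h2η
      rw [abs_of_neg (by linarith : t - s y < 0)] at h2η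
      linarith [hsmem.2]
  -- conclusions
  refine ⟨V, ⟨Metric.mem_ball_self (by linarith), hxSi'⟩, hVSi', ?_, ?_, ?_, ?_, ?_, ?_, ?_⟩
  · -- relative openness
    have : {y : Si' | (y : X) ∈ V} = Subtype.val ⁻¹' (Metric.ball x (ρ/2)) := by
      ext y; simp [hVdef, y.2]
    rw [this]
    exact Metric.isOpen_ball.preimage continuous_subtype_val
  · -- closure
    intro z hz
    have hz1 : z ∈ closure (Metric.ball x (ρ/2)) :=
      closure_mono inter_subset_left hz
    have hz2 : z ∈ Si' := hSi'.closure_subset (closure_mono inter_subset_right hz)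
    have hzb : z ∈ Metric.ball x ρ :=
      Metric.closedBall_subset_ball (by linarith)
        (Metric.closure_ball_subset_closedBall hz1)
    exact ⟨(hρsub hzb).2, hz2⟩
  · -- continuity of hitT
    exact (hscont.mono hVU1).congr hhit
  · -- bounds
    intro y hy
    obtain ⟨hsmem, hshit, hspos, -⟩ := hVspec y hy
    rw [show hitMap φ Sj' y = φ (hitT φ Sj' y) y from rfl, hhit y hy]
    exact ⟨hspos, by linarith [hsmem.2], hshit⟩
  · -- openness of the hitting map
    intro A hAV hAopen
    obtain ⟨O, hOopen, hOpre⟩ := isOpen_induced_iff.mp hAopen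
    have hAeq : A = O ∩ Si' := by
      ext a
      constructor
      · intro ha
        have haSi' : a ∈ Si' := hVSi' (hAV ha)
        have : (⟨a, haSi'⟩ : Si') ∈ Subtype.val ⁻¹' O := by rw [hOpre]; exact ha
        exact ⟨this, haSi'⟩
      · rintro ⟨haO, haSi'⟩
        have : (⟨a, haSi'⟩ : Si') ∈ Subtype.val ⁻¹' O := haO
        rw [hOpre] at this
        exact this
    have himg : hitMap φ Sj' '' A = (U2 ∩ (fun z => φ (rr z) z) ⁻¹' O) ∩ Sj' := by
      ext z
      constructor
      · rintro ⟨y, hyA, rfl⟩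
        have hyV : y ∈ V := hAV hyA
        obtain ⟨hsmem, hshit, hspos, hFy⟩ := hVspec y hyV
        have hzval : hitMap φ Sj' y = φ (s y) y := by
          rw [show hitMap φ Sj' y = φ (hitT φ Sj' y) y from rfl, hhit y hyV]
        rw [hzval]
        have hU2mem : φ (s y) y ∈ U2 := by
          show φ (-t0) (φ (s y) y) ∈ Wi
          have : φ (-t0) (φ (s y) y) = φ (s y - t0) y := by
            rw [← hφ.map_add]; congr 1; ring
          rw [this]; exact hFy
        have hback : φ (-(s y)) (φ (s y) y) = y := hφ.neg_cancel _ _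
        have hrrval : rr (φ (s y) y) = -(s y) := by
          apply winHit_eq hφ hSi' hcsi' hlr2
          · exact ⟨by linarith [hsmem.1, hsmem.2], by linarith [hsmem.1, hsmem.2]⟩
          · rw [hback]; exact hVSi' hyV
        refine ⟨⟨hU2mem, ?_⟩, hshit⟩
        show φ (rr (φ (s y) y)) (φ (s y) y) ∈ O
        rw [hrrval, hback]
        exact (hAeq ▸ hyA).1
      · rintro ⟨⟨hzU2, hzO⟩, hzSj'⟩
        obtain ⟨hrm, hrSi'⟩ := winHit_spec hφ hSi' (hex2 z hzU2)
        set y := φ (rr z) z with hydef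
        have hyA : y ∈ A := by rw [hAeq]; exact ⟨hzO, hrSi'⟩
        have hyV : y ∈ V := hAV hyA
        have hback : φ (-(rr z)) y = z := hφ.neg_cancel _ _
        have hsval : s y = -(rr z) := by
          apply winHit_eq hφ hSj' hcsj' hlr1
          · exact ⟨by linarith [hrm.1, hrm.2], by linarith [hrm.1, hrm.2]⟩
          · rw [hback]; exact hzSj'
        refine ⟨y, hyA, ?_⟩
        rw [show hitMap φ Sj' y = φ (hitT φ Sj' y) y from rfl, hhit y hyV, hsval, hback]
    have hset : {w : Sj' | (w : X) ∈ hitMap φ Sj' '' A} =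
        Subtype.val ⁻¹' (U2 ∩ (fun z => φ (rr z) z) ⁻¹' O) := by
      ext w
      simp only [mem_setOf_eq, mem_preimage, himg, mem_inter_iff]
      exact ⟨fun h => h.1, fun h => ⟨h, w.2⟩⟩
    rw [hset]
    have hopen2 : IsOpen (U2 ∩ (fun z => φ (rr z) z) ⁻¹' O) :=
      (hφ.cont.comp_continuousOn (continuousOn_id.prodMk hrrcont)).isOpen_inter_preimage
        hU2open hOopen
    exact hopen2.preimage continuous_subtype_val
  · -- injectivity
    intro y1 hy1 y2 hy2 heq
    obtain ⟨hm1, hh1, -, -⟩ := hVspec y1 hy1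
    obtain ⟨hm2, hh2, -, -⟩ := hVspec y2 hy2
    have heq' : φ (s y1) y1 = φ (s y2) y2 := by
      rw [show hitMap φ Sj' y1 = φ (hitT φ Sj' y1) y1 from rfl,
        show hitMap φ Sj' y2 = φ (hitT φ Sj' y2) y2 from rfl,
        hhit y1 hy1, hhit y2 hy2] at heq
      exact heq
    have hy1' : y1 = φ (s y2 - s y1) y2 := by
      have h1 : φ (-(s y1)) (φ (s y1) y1) = y1 := hφ.neg_cancel _ _
      have h2 : φ (-(s y1)) (φ (s y2) y2) = φ (s y2 - s y1) y2 := by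
        rw [← hφ.map_add]; congr 1; ring
      rw [← h2, ← heq']
      exact h1.symm
    have hmem1 : ((y2, s y2 - s y1) : X × ℝ) ∈ Si' ×ˢ Icc (-η) η :=
      ⟨hVSi' hy2, by constructor <;> simp <;> linarith [hm1.1, hm1.2, hm2.1, hm2.2]⟩
    have hmem2 : ((y1, (0:ℝ)) : X × ℝ) ∈ Si' ×ˢ Icc (-η) η :=
      ⟨hVSi' hy1, by constructor <;> simp <;> linarith⟩
    have hval : (fun p : X × ℝ => φ p.2 p.1) (y2, s y2 - s y1) =
        (fun p : X × ℝ => φ p.2 p.1) (y1, (0:ℝ)) := by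
      simp only
      rw [hφ.map_zero, ← hy1']
    have hpair := hcsi'.2 hmem1 hmem2 hval
    exact (congrArg Prod.fst hpair).symm
  · -- continuity of hitMap
    have : ContinuousOn (fun y => φ (s y) y) V :=
      hφ.cont.comp_continuousOn (f := fun y => (y, s y)) (continuousOn_id.prodMk (hscont.mono hVU1))
    apply this.congr
    intro y hy
    rw [show hitMap φ Sj' y = φ (hitT φ Sj' y) y from rfl, hhit y hy]
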